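/- The function v extends to a real-analytic function at 0 with v(0) = 0, v′(0) = M₀, v″(0) = M₁, and more generally v^{(k)}(0) = M_{k−1}/(k−1)! for all k ≥ 1; consequently V extends real-analytically to a neighbourhood of 0 with V(0) = 0, V′(0) = 1 − M₀, V″(0) = M₀² − M₁, and V‴(0) = −(1/2)M₂ + 3M₁M₀ − 2M₀³. Moreover, with V_ε the effective potential obtained by replacing p(s) with p(s)e^{−εs}, the derivative of ε ↦ V_ε′(0) at ε = 0 equals M₁. -/

import Mathlib

open MeasureTheory Filter Set Topology

/-- Modified Bessel function of the first kind `I₁`, defined by its power series. -/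
noncomputable def besselI1 (z : ℝ) : ℝ :=
  ∑' k : ℕ, (1 / ((Nat.factorial k : ℝ) * (Nat.factorial (k + 1) : ℝ))) * (z / 2) ^ (2 * k + 1)

/-- The moments `M_k = ∫₀^∞ p(s) e^{-s} s^k ds`. -/
noncomputable def moment (p : ℝ → ℝ) (k : ℕ) : ℝ :=
  ∫ s in Set.Ioi (0 : ℝ), p s * Real.exp (-s) * s ^ k

/-- `v(t) = ∫₀^∞ p(s) e^{-s} √(t/s) I₁(2√(st)) ds`. -/
noncomputable def vFun (p : ℝ → ℝ) (t : ℝ) : ℝ :=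
  ∫ s in Set.Ioi (0 : ℝ), p s * Real.exp (-s) * Real.sqrt (t / s) * besselI1 (2 * Real.sqrt (s * t))

/-- The effective potential `V(t) = t - log(1 + v(t))`. -/
noncomputable def VFun (p : ℝ → ℝ) (t : ℝ) : ℝ :=
  t - Real.log (1 + vFun p t)

/-! ### Auxiliary machinery -/

noncomputable def vCoeff (p : ℝ → ℝ) : ℕ → ℝ
  | 0 => 0
  | (k+1) => moment p k / ((Nat.factorial k : ℝ) * (Nat.factorial (k+1) : ℝ))

noncomputable def vSeries (p : ℝ → ℝ) : FormalMultilinearSeries ℝ ℝ ℝ :=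
  FormalMultilinearSeries.ofScalars ℝ (vCoeff p)

noncomputable def vExt (p : ℝ → ℝ) : ℝ → ℝ := (vSeries p).sum

noncomputable def VExt (p : ℝ → ℝ) : ℝ → ℝ := fun t => t - Real.log (1 + vExt p t)

section Aux

variable {p : ℝ → ℝ}

lemma aux_exp_pow_le (s : ℝ) (hs : 0 ≤ s) (k : ℕ) :
    Real.exp (-s) * s ^ k ≤ (Nat.factorial k : ℝ) := by
  have h := Real.pow_div_factorial_le_exp s hs k
  have hk : (0:ℝ) < (Nat.factorial k : ℝ) := by positivity
  rw [div_le_iff₀ hk] at h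
  calc Real.exp (-s) * s ^ k ≤ Real.exp (-s) * (Real.exp s * (Nat.factorial k : ℝ)) := by
        exact mul_le_mul_of_nonneg_left h (Real.exp_pos _).le
    _ = (Nat.factorial k : ℝ) := by
        rw [← mul_assoc, ← Real.exp_add]; simp

lemma integrable_term (hmeas : Measurable p) (hpos : ∀ s, 0 ≤ s → 0 ≤ p s)
    (hint : IntegrableOn p (Set.Ioi 0)) (k : ℕ) :
    IntegrableOn (fun s => p s * Real.exp (-s) * s ^ k) (Set.Ioi 0) := by
  have hmc : Integrable (fun s => (Nat.factorial k : ℝ) * p s) (volume.restrict (Set.Ioi 0)) :=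
    hint.const_mul _
  refine hmc.mono ?_ ?_
  · exact ((hmeas.mul (Real.measurable_exp.comp measurable_neg)).mul
      (measurable_id.pow_const k)).aestronglyMeasurable
  · filter_upwards [ae_restrict_mem measurableSet_Ioi] with s hs
    have hs0 : (0:ℝ) ≤ s := (le_of_lt hs)
    have hp0 : 0 ≤ p s := hpos s hs0
    rw [Real.norm_eq_abs, Real.norm_eq_abs, abs_of_nonneg (by positivity),
      abs_of_nonneg (by positivity)]
    calc p s * Real.exp (-s) * s ^ k = p s * (Real.exp (-s) * s ^ k) := by ring
      _ ≤ p s * (Nat.factorial k : ℝ) := mul_le_mul_of_nonneg_left (aux_exp_pow_le s hs0 k) hp0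
      _ = (Nat.factorial k : ℝ) * p s := by ring

lemma moment_nonneg (hpos : ∀ s, 0 ≤ s → 0 ≤ p s) (k : ℕ) : 0 ≤ moment p k := by
  apply setIntegral_nonneg measurableSet_Ioi
  intro s hs
  have h0 : 0 ≤ p s := hpos s (le_of_lt hs)
  exact mul_nonneg (mul_nonneg h0 (Real.exp_pos _).le) (pow_nonneg (le_of_lt hs) k)

lemma moment_le (hmeas : Measurable p) (hpos : ∀ s, 0 ≤ s → 0 ≤ p s)
    (hint : IntegrableOn p (Set.Ioi 0)) (k : ℕ) :
    moment p k ≤ (Nat.factorial k : ℝ) * ∫ s in Set.Ioi (0:ℝ), p s := by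
  rw [← MeasureTheory.integral_const_mul]
  apply setIntegral_mono_on (integrable_term hmeas hpos hint k) (hint.const_mul _)
    measurableSet_Ioi
  intro s hs
  have hs0 : (0:ℝ) ≤ s := le_of_lt hs
  have hp0 : 0 ≤ p s := hpos s hs0
  calc p s * Real.exp (-s) * s ^ k = p s * (Real.exp (-s) * s ^ k) := by ring
    _ ≤ p s * (Nat.factorial k : ℝ) := mul_le_mul_of_nonneg_left (aux_exp_pow_le s hs0 k) hp0
    _ = (Nat.factorial k : ℝ) * p s := by ring

lemma vCoeff_nonneg (hpos : ∀ s, 0 ≤ s → 0 ≤ p s) (n : ℕ) : 0 ≤ vCoeff p n := by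
  cases n with
  | zero => simp [vCoeff]
  | succ k =>
    have := moment_nonneg hpos k
    have h1 : (0:ℝ) < (Nat.factorial k : ℝ) * (Nat.factorial (k+1) : ℝ) := by positivity
    exact div_nonneg this h1.le

lemma vCoeff_le (hmeas : Measurable p) (hpos : ∀ s, 0 ≤ s → 0 ≤ p s)
    (hint : IntegrableOn p (Set.Ioi 0)) (n : ℕ) :
    vCoeff p n ≤ (∫ s in Set.Ioi (0:ℝ), p s) / (Nat.factorial n : ℝ) := by
  have hC : 0 ≤ ∫ s in Set.Ioi (0:ℝ), p s :=
    setIntegral_nonneg measurableSet_Ioi (fun s hs => hpos s (le_of_lt hs))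
  cases n with
  | zero => simpa [vCoeff] using hC
  | succ k =>
    have h1 : (0:ℝ) < (Nat.factorial k : ℝ) := by positivity
    have h2 : (0:ℝ) < (Nat.factorial (k+1) : ℝ) := by positivity
    rw [vCoeff, div_le_div_iff₀ (by positivity) h2]
    calc moment p k * (Nat.factorial (k+1) : ℝ)
        ≤ ((Nat.factorial k : ℝ) * ∫ s in Set.Ioi (0:ℝ), p s) * (Nat.factorial (k+1) : ℝ) := by
          exact mul_le_mul_of_nonneg_right (moment_le hmeas hpos hint k) h2.le
      _ = (∫ s in Set.Ioi (0:ℝ), p s) * ((Nat.factorial k : ℝ) * (Nat.factorial (k+1) : ℝ)) := by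
          ring

lemma summable_vCoeff_mul (hmeas : Measurable p) (hpos : ∀ s, 0 ≤ s → 0 ≤ p s)
    (hint : IntegrableOn p (Set.Ioi 0)) (t : ℝ) :
    Summable (fun n => vCoeff p n * t ^ n) := by
  set C := ∫ s in Set.Ioi (0:ℝ), p s with hCdef
  have hC : 0 ≤ C := setIntegral_nonneg measurableSet_Ioi (fun s hs => hpos s (le_of_lt hs))
  refine Summable.of_norm_bounded (g := fun n => C * (|t| ^ n / (Nat.factorial n : ℝ)))
    ((Real.summable_pow_div_factorial |t|).mul_left C) ?_
  intro n
  rw [Real.norm_eq_abs, abs_mul, abs_of_nonneg (vCoeff_nonneg hpos n), abs_pow]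
  calc vCoeff p n * |t| ^ n ≤ (C / (Nat.factorial n : ℝ)) * |t| ^ n := by
        exact mul_le_mul_of_nonneg_right (vCoeff_le hmeas hpos hint n) (by positivity)
    _ = C * (|t| ^ n / (Nat.factorial n : ℝ)) := by ring

end Aux

section Series

variable {p : ℝ → ℝ}

lemma vSeries_radius_pos (hmeas : Measurable p) (hpos : ∀ s, 0 ≤ s → 0 ≤ p s)
    (hint : IntegrableOn p (Set.Ioi 0)) : 0 < (vSeries p).radius := by
  have h1 : (1 : NNReal) ≤ (vSeries p).radius := by
    apply FormalMultilinearSeries.le_radius_of_summable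
    simp only [NNReal.coe_one]
    have : (fun n => ‖vSeries p n‖ * (1:ℝ) ^ n) = fun n => vCoeff p n := by
      funext n
      rw [vSeries, FormalMultilinearSeries.ofScalars_norm, one_pow, mul_one,
        Real.norm_eq_abs, abs_of_nonneg (vCoeff_nonneg hpos n)]
    rw [this]
    simpa using summable_vCoeff_mul hmeas hpos hint 1
  calc (0:ENNReal) < 1 := by norm_num
    _ ≤ (vSeries p).radius := by exact_mod_cast h1

lemma vExt_hasFPower (hmeas : Measurable p) (hpos : ∀ s, 0 ≤ s → 0 ≤ p s)
    (hint : IntegrableOn p (Set.Ioi 0)) :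
    HasFPowerSeriesOnBall (vExt p) (vSeries p) 0 (vSeries p).radius :=
  (vSeries p).hasFPowerSeriesOnBall (vSeries_radius_pos hmeas hpos hint)

lemma vExt_analyticAt (hmeas : Measurable p) (hpos : ∀ s, 0 ≤ s → 0 ≤ p s)
    (hint : IntegrableOn p (Set.Ioi 0)) : AnalyticAt ℝ (vExt p) 0 :=
  (vExt_hasFPower hmeas hpos hint).analyticAt

lemma vExt_eq_tsum (t : ℝ) : vExt p t = ∑' n, vCoeff p n * t ^ n := by
  rw [vExt, FormalMultilinearSeries.sum]
  congr 1
  funext n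
  rw [vSeries, FormalMultilinearSeries.ofScalars_apply_eq, smul_eq_mul]

lemma vExt_iteratedDeriv (hmeas : Measurable p) (hpos : ∀ s, 0 ≤ s → 0 ≤ p s)
    (hint : IntegrableOn p (Set.Ioi 0)) (n : ℕ) :
    iteratedDeriv n (vExt p) 0 = (Nat.factorial n : ℝ) * vCoeff p n := by
  have h := (vExt_hasFPower hmeas hpos hint).factorial_smul (y := (1:ℝ)) n
  rw [iteratedDeriv_eq_iteratedFDeriv, ← h, vSeries,
    FormalMultilinearSeries.ofScalars_apply_eq]
  simp [nsmul_eq_mul]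

lemma vExt_zero (hmeas : Measurable p) (hpos : ∀ s, 0 ≤ s → 0 ≤ p s)
    (hint : IntegrableOn p (Set.Ioi 0)) : vExt p 0 = 0 := by
  rw [vExt_eq_tsum]
  rw [Summable.tsum_eq_zero_add (summable_vCoeff_mul hmeas hpos hint 0)]
  simp [vCoeff]

lemma vExt_iteratedDeriv' (hmeas : Measurable p) (hpos : ∀ s, 0 ≤ s → 0 ≤ p s)
    (hint : IntegrableOn p (Set.Ioi 0)) (k : ℕ) (hk : 1 ≤ k) :
    iteratedDeriv k (vExt p) 0 = moment p (k-1) / (Nat.factorial (k-1) : ℝ) := by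
  obtain ⟨m, rfl⟩ : ∃ m, k = m + 1 := ⟨k - 1, (Nat.succ_pred_eq_of_pos hk).symm⟩
  rw [vExt_iteratedDeriv hmeas hpos hint, vCoeff]
  simp only [Nat.add_sub_cancel]
  have h1 : (0:ℝ) < (Nat.factorial m : ℝ) := by positivity
  have h2 : (0:ℝ) < (Nat.factorial (m+1) : ℝ) := by positivity
  field_simp

lemma vExt_deriv_zero (hmeas : Measurable p) (hpos : ∀ s, 0 ≤ s → 0 ≤ p s)
    (hint : IntegrableOn p (Set.Ioi 0)) : deriv (vExt p) 0 = moment p 0 := by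
  have := vExt_iteratedDeriv' hmeas hpos hint 1 le_rfl
  rwa [iteratedDeriv_one, Nat.sub_self, Nat.factorial_zero, Nat.cast_one, div_one] at this

end Series

section Agree

variable {p : ℝ → ℝ}

lemma vExt_eq_vFun (hmeas : Measurable p) (hpos : ∀ s, 0 ≤ s → 0 ≤ p s)
    (hint : IntegrableOn p (Set.Ioi 0)) (t : ℝ) (ht : 0 ≤ t) : vExt p t = vFun p t := by
  set f : ℕ → ℝ → ℝ := fun k s => (p s * Real.exp (-s) * s ^ k) *
    (t ^ (k+1) / ((Nat.factorial k : ℝ) * (Nat.factorial (k+1) : ℝ))) with hf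
  have hfint : ∀ k, Integrable (f k) (volume.restrict (Set.Ioi 0)) := fun k =>
    (integrable_term hmeas hpos hint k).mul_const _
  have hksum : Summable (fun k => vCoeff p (k+1) * t ^ (k+1)) := by
    have := (summable_vCoeff_mul hmeas hpos hint t).comp_injective Nat.succ_injective
    exact this
  have hintf : ∀ k, ∫ s in Set.Ioi (0:ℝ), f k s = vCoeff p (k+1) * t ^ (k+1) := by
    intro k
    rw [hf]
    simp only []
    rw [MeasureTheory.integral_mul_const]
    rw [vCoeff]
    rw [show moment p k = ∫ s in Set.Ioi (0:ℝ), p s * Real.exp (-s) * s ^ k from rfl]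
    ring
  have hnormint : ∀ k, ∫ s in Set.Ioi (0:ℝ), ‖f k s‖ = vCoeff p (k+1) * t ^ (k+1) := by
    intro k
    rw [← hintf k]
    apply setIntegral_congr_fun measurableSet_Ioi
    intro s hs
    have hps : 0 ≤ p s := hpos s (le_of_lt hs)
    have hfac : (0:ℝ) < (Nat.factorial k : ℝ) * (Nat.factorial (k+1) : ℝ) := by positivity
    simp only [Real.norm_eq_abs]
    rw [abs_of_nonneg]
    exact mul_nonneg (mul_nonneg (mul_nonneg hps (Real.exp_pos _).le)
      (pow_nonneg (le_of_lt hs) k)) (div_nonneg (pow_nonneg ht _) hfac.le)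
  have hsumnorm : Summable (fun k => ∫ s in Set.Ioi (0:ℝ), ‖f k s‖) := by
    have heq : (fun k => ∫ s in Set.Ioi (0:ℝ), ‖f k s‖)
        = fun k => vCoeff p (k+1) * t ^ (k+1) := funext hnormint
    rw [heq]; exact hksum
  have hswap := MeasureTheory.integral_tsum_of_summable_integral_norm hfint hsumnorm
  have hpt : ∀ s ∈ Set.Ioi (0:ℝ),
      p s * Real.exp (-s) * Real.sqrt (t / s) * besselI1 (2 * Real.sqrt (s * t))
        = ∑' k, f k s := by
    intro s hs
    have hs0 : (0:ℝ) < s := hs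
    have hst : (0:ℝ) ≤ s * t := mul_nonneg hs0.le ht
    have hb : besselI1 (2 * Real.sqrt (s*t))
        = ∑' k, (1 / ((Nat.factorial k : ℝ) * (Nat.factorial (k+1) : ℝ)))
            * (Real.sqrt (s*t)) ^ (2*k+1) := by
      rw [besselI1]
      congr 1
      funext k
      rw [mul_div_cancel_left₀ _ (two_ne_zero)]
    rw [hb, ← tsum_mul_left]
    congr 1
    funext k
    have h1 : Real.sqrt (s*t) ^ (2*k+1) = (s*t)^k * Real.sqrt (s*t) := by
      rw [pow_add, pow_mul, Real.sq_sqrt hst, pow_one]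
    have h2 : Real.sqrt (t/s) * Real.sqrt (s*t) = t := by
      rw [← Real.sqrt_mul (div_nonneg ht hs0.le)]
      have h3 : t / s * (s*t) = t^2 := by field_simp
      rw [h3, Real.sqrt_sq ht]
    calc p s * Real.exp (-s) * Real.sqrt (t/s)
          * ((1 / ((Nat.factorial k : ℝ) * (Nat.factorial (k+1) : ℝ)))
              * Real.sqrt (s*t) ^ (2*k+1))
        = (Real.sqrt (t/s) * Real.sqrt (s*t)) * (p s * Real.exp (-s)
            * ((s*t)^k * (1 / ((Nat.factorial k : ℝ) * (Nat.factorial (k+1) : ℝ))))) := by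
          rw [h1]; ring
      _ = f k s := by rw [h2, hf]; simp only [mul_pow]; ring
  have hv : vFun p t = ∑' k, vCoeff p (k+1) * t ^ (k+1) := by
    rw [vFun]
    rw [setIntegral_congr_fun measurableSet_Ioi hpt]
    rw [← hswap]
    congr 1
    funext k
    exact hintf k
  rw [hv, vExt_eq_tsum, Summable.tsum_eq_zero_add (summable_vCoeff_mul hmeas hpos hint t)]
  simp [vCoeff]

end Agree

section VPart

variable {p : ℝ → ℝ}

lemma analyticAt_real_log {x : ℝ} (hx : 0 < x) : AnalyticAt ℝ Real.log x := by
  have h1 : AnalyticAt ℂ Complex.log (x : ℂ) :=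
    analyticAt_clog (by rw [Complex.mem_slitPlane_iff]; left; simpa using hx)
  have hin : AnalyticAt ℝ (fun y : ℝ => (y : ℂ)) x := Complex.ofRealCLM.analyticAt x
  have hmid : AnalyticAt ℝ (fun y : ℝ => Complex.log (y : ℂ)) x := h1.restrictScalars.comp hin
  have h2 : AnalyticAt ℝ (fun y : ℝ => (Complex.log (y:ℂ)).re) x :=
    (Complex.reCLM.analyticAt _).comp hmid
  have heq : Real.log = fun y : ℝ => (Complex.log (y:ℂ)).re := by
    funext y; exact (Complex.log_ofReal_re y).symm
  rw [heq]; exact h2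

lemma iteratedDeriv_two (f : ℝ → ℝ) : iteratedDeriv 2 f = deriv (deriv f) := by
  rw [show (2:ℕ) = 1 + 1 from rfl, iteratedDeriv_succ, iteratedDeriv_one]

lemma iteratedDeriv_three (f : ℝ → ℝ) : iteratedDeriv 3 f = deriv (deriv (deriv f)) := by
  rw [show (3:ℕ) = 2 + 1 from rfl, iteratedDeriv_succ, iteratedDeriv_two]

lemma VExt_analyticAt (hmeas : Measurable p) (hpos : ∀ s, 0 ≤ s → 0 ≤ p s)
    (hint : IntegrableOn p (Set.Ioi 0)) : AnalyticAt ℝ (VExt p) 0 := by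
  have hv := vExt_analyticAt hmeas hpos hint
  have h1 : AnalyticAt ℝ (fun t => 1 + vExt p t) 0 := analyticAt_const.add hv
  have h2 : AnalyticAt ℝ Real.log ((fun t => 1 + vExt p t) 0) := by
    simp only [vExt_zero hmeas hpos hint, add_zero]
    exact analyticAt_real_log one_pos
  exact analyticAt_id.sub (AnalyticAt.comp (f := fun t => 1 + vExt p t) (x := (0:ℝ)) h2 h1)

lemma VExt_zero (hmeas : Measurable p) (hpos : ∀ s, 0 ≤ s → 0 ≤ p s)
    (hint : IntegrableOn p (Set.Ioi 0)) : VExt p 0 = 0 := by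
  rw [VExt]; simp [vExt_zero hmeas hpos hint]

lemma VExt_derivs (hmeas : Measurable p) (hpos : ∀ s, 0 ≤ s → 0 ≤ p s)
    (hint : IntegrableOn p (Set.Ioi 0)) :
    deriv (VExt p) 0 = 1 - moment p 0 ∧
    iteratedDeriv 2 (VExt p) 0 = (moment p 0)^2 - moment p 1 ∧
    iteratedDeriv 3 (VExt p) 0
      = -(1/2) * moment p 2 + 3 * moment p 1 * moment p 0 - 2*(moment p 0)^3 := by
  set g := vExt p with hgdef
  have hg : AnalyticAt ℝ g 0 := vExt_analyticAt hmeas hpos hint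
  have hg0 : g 0 = 0 := vExt_zero hmeas hpos hint
  have hG1 : deriv g 0 = moment p 0 := vExt_deriv_zero hmeas hpos hint
  have hG2 : deriv (deriv g) 0 = moment p 1 := by
    have h := vExt_iteratedDeriv' hmeas hpos hint 2 (by norm_num)
    rw [iteratedDeriv_two] at h
    simpa using h
  have hG3 : deriv (deriv (deriv g)) 0 = moment p 2 / 2 := by
    have h := vExt_iteratedDeriv' hmeas hpos hint 3 (by norm_num)
    rw [iteratedDeriv_three] at h
    norm_num [Nat.factorial] at h
    exact h
  have hevan : ∀ᶠ t in 𝓝 (0:ℝ), AnalyticAt ℝ g t := hg.eventually_analyticAt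
  have hevne : ∀ᶠ t in 𝓝 (0:ℝ), 1 + g t ≠ 0 := by
    have hc : ContinuousAt (fun t => 1 + g t) 0 := continuousAt_const.add hg.continuousAt
    have hne : (fun t => 1 + g t) 0 ≠ 0 := by simp [hg0]
    exact hc.eventually_ne hne
  obtain ⟨U, hUsub, hUopen, hU0⟩ := mem_nhds_iff.mp (hevan.and hevne)
  have hUnhds : U ∈ 𝓝 (0:ℝ) := hUopen.mem_nhds hU0
  have hanal : AnalyticOnNhd ℝ g U := fun t ht => (hUsub ht).1
  have hne : ∀ t ∈ U, 1 + g t ≠ 0 := fun t ht => (hUsub ht).2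
  have hg' : AnalyticOnNhd ℝ (deriv g) U := hanal.deriv
  have hg'' : AnalyticOnNhd ℝ (deriv (deriv g)) U := hg'.deriv
  have hdg : ∀ t ∈ U, HasDerivAt g (deriv g t) t :=
    fun t ht => (hanal t ht).differentiableAt.hasDerivAt
  have hdg' : ∀ t ∈ U, HasDerivAt (deriv g) (deriv (deriv g) t) t :=
    fun t ht => (hg' t ht).differentiableAt.hasDerivAt
  have hdg'' : ∀ t ∈ U, HasDerivAt (deriv (deriv g)) (deriv (deriv (deriv g)) t) t :=
    fun t ht => (hg'' t ht).differentiableAt.hasDerivAt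
  have hVeq : VExt p = fun u => u - Real.log (1 + g u) := rfl
  have E1 : ∀ t ∈ U, HasDerivAt (VExt p) (1 - deriv g t / (1 + g t)) t := by
    intro t ht
    have hw : HasDerivAt (fun u => 1 + g u) (deriv g t) t := (hdg t ht).const_add 1
    have hlog : HasDerivAt (fun u => Real.log (1 + g u)) (deriv g t / (1 + g t)) t :=
      hw.log (hne t ht)
    rw [hVeq]
    exact (hasDerivAt_id t).sub hlog
  have E1' : deriv (VExt p) =ᶠ[𝓝 (0:ℝ)] fun t => 1 - deriv g t / (1 + g t) := by
    filter_upwards [hUnhds] with t ht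
    exact (E1 t ht).deriv
  refine ⟨?_, ?_, ?_⟩
  · rw [(E1 0 hU0).deriv, hG1, hg0]
    norm_num
  · rw [iteratedDeriv_two, E1'.deriv_eq]
    have hA : HasDerivAt (fun t => deriv g t / (1 + g t))
        ((deriv (deriv g) 0 * (1 + g 0) - deriv g 0 * deriv g 0) / (1 + g 0)^2) 0 :=
      (hdg' 0 hU0).div ((hdg 0 hU0).const_add 1) (hne 0 hU0)
    have hone : HasDerivAt (fun t => 1 - deriv g t / (1 + g t))
        (0 - (deriv (deriv g) 0 * (1 + g 0) - deriv g 0 * deriv g 0) / (1 + g 0)^2) 0 :=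
      (hasDerivAt_const 0 (1:ℝ)).sub hA
    rw [hone.deriv, hg0, hG1, hG2]
    norm_num
    ring
  · have hAderiv : ∀ t ∈ U, HasDerivAt (fun u => deriv g u / (1 + g u))
        ((deriv (deriv g) t * (1 + g t) - deriv g t * deriv g t) / (1 + g t)^2) t :=
      fun t ht => (hdg' t ht).div ((hdg t ht).const_add 1) (hne t ht)
    have E2 : deriv (deriv (VExt p)) =ᶠ[𝓝 (0:ℝ)] fun t =>
        0 - (deriv (deriv g) t * (1 + g t) - deriv g t * deriv g t) / (1 + g t)^2 := by
      refine E1'.deriv.trans ?_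
      filter_upwards [hUnhds] with t ht
      exact ((hasDerivAt_const t (1:ℝ)).sub (hAderiv t ht)).deriv
    rw [iteratedDeriv_three, E2.deriv_eq]
    have hN : HasDerivAt (fun t => deriv (deriv g) t * (1 + g t) - deriv g t * deriv g t)
        ((deriv (deriv (deriv g)) 0 * (1 + g 0) + deriv (deriv g) 0 * deriv g 0)
          - (deriv (deriv g) 0 * deriv g 0 + deriv g 0 * deriv (deriv g) 0)) 0 :=
      ((hdg'' 0 hU0).mul ((hdg 0 hU0).const_add 1)).sub ((hdg' 0 hU0).mul (hdg' 0 hU0))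
    have hD : HasDerivAt (fun t => (1 + g t)^2)
        ((2:ℕ) * (1 + g 0)^(2-1) * deriv g 0) 0 := ((hdg 0 hU0).const_add 1).pow 2
    have hDne : ((fun t => (1 + g t)^2) 0) ≠ 0 := by
      simp only [hg0, add_zero]; norm_num
    have hB := hN.div hD hDne
    have hfin : deriv (fun t => 0 - (deriv (deriv g) t * (1 + g t) - deriv g t * deriv g t) / (1 + g t)^2) 0 = _ :=
      ((hasDerivAt_const (0:ℝ) (0:ℝ)).sub hB).deriv
    rw [hfin, hg0, hG1, hG2, hG3]
    norm_num
    ring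
end VPart

section Final

variable {p : ℝ → ℝ}

lemma VExt_eq_VFun (hmeas : Measurable p) (hpos : ∀ s, 0 ≤ s → 0 ≤ p s)
    (hint : IntegrableOn p (Set.Ioi 0)) (t : ℝ) (ht : 0 ≤ t) : VExt p t = VFun p t := by
  rw [VExt, VFun, vExt_eq_vFun hmeas hpos hint t ht]

lemma derivWithin_VFun_eq (hmeas : Measurable p) (hpos : ∀ s, 0 ≤ s → 0 ≤ p s)
    (hint : IntegrableOn p (Set.Ioi 0)) :
    derivWithin (VFun p) (Set.Ici 0) 0 = 1 - moment p 0 := by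
  have hev : VFun p =ᶠ[𝓝[Set.Ici 0] (0:ℝ)] VExt p := by
    filter_upwards [self_mem_nhdsWithin] with t ht
    exact (VExt_eq_VFun hmeas hpos hint t ht).symm
  rw [hev.derivWithin_eq (VExt_eq_VFun hmeas hpos hint 0 le_rfl).symm]
  rw [DifferentiableAt.derivWithin ((VExt_analyticAt hmeas hpos hint).differentiableAt)
    (uniqueDiffOn_Ici 0 0 Set.self_mem_Ici)]
  exact (VExt_derivs hmeas hpos hint).1

lemma part3 (hmeas : Measurable p) (hpos : ∀ s, 0 ≤ s → 0 ≤ p s)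
    (hint : IntegrableOn p (Set.Ioi 0)) :
    HasDerivWithinAt
      (fun ε : ℝ =>
        derivWithin (VFun (fun s => p s * Real.exp (-ε * s))) (Set.Ici 0) 0)
      (moment p 1) (Set.Ici 0) 0 := by
  have hm : ∀ ε : ℝ, Measurable (fun s => p s * Real.exp (-ε * s)) := fun ε =>
    hmeas.mul (Real.measurable_exp.comp (measurable_id.const_mul (-ε)))
  have hp : ∀ ε : ℝ, ∀ s, 0 ≤ s → 0 ≤ p s * Real.exp (-ε * s) := fun ε s hs =>
    mul_nonneg (hpos s hs) (Real.exp_pos _).le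
  have hi : ∀ ε : ℝ, 0 ≤ ε → IntegrableOn (fun s => p s * Real.exp (-ε * s)) (Set.Ioi 0) := by
    intro ε hε
    refine MeasureTheory.Integrable.mono hint (hm ε).aestronglyMeasurable ?_
    filter_upwards [ae_restrict_mem measurableSet_Ioi] with s hs
    rw [Real.norm_eq_abs, Real.norm_eq_abs, abs_mul,
      abs_of_nonneg (Real.exp_pos _).le]
    calc |p s| * Real.exp (-ε * s) ≤ |p s| * 1 := by
          apply mul_le_mul_of_nonneg_left _ (abs_nonneg _)
          apply Real.exp_le_one_iff.mpr
          have hs0 : (0:ℝ) ≤ s := le_of_lt hs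
          nlinarith
      _ = |p s| := mul_one _
  have key : ∀ ε : ℝ, 0 ≤ ε →
      derivWithin (VFun (fun s => p s * Real.exp (-ε * s))) (Set.Ici 0) 0
        = 1 - moment (fun s => p s * Real.exp (-ε * s)) 0 :=
    fun ε hε => derivWithin_VFun_eq (hm ε) (hp ε) (hi ε hε)
  set F : ℝ → ℝ → ℝ := fun ε s => p s * Real.exp (-ε * s) * Real.exp (-s) with hFdef
  set F' : ℝ → ℝ → ℝ := fun ε s => p s * (-s * Real.exp (-ε * s)) * Real.exp (-s) with hF'def
  have hmom : ∀ ε : ℝ, moment (fun s => p s * Real.exp (-ε * s)) 0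
      = ∫ s in Set.Ioi (0:ℝ), F ε s := by
    intro ε; rw [moment]; simp only [pow_zero, mul_one, hFdef]
  have hFmeas : ∀ x : ℝ, AEStronglyMeasurable (F x) (volume.restrict (Set.Ioi 0)) := fun x =>
    ((hm x).mul (Real.measurable_exp.comp measurable_neg)).aestronglyMeasurable
  have hF'meas : AEStronglyMeasurable (F' 0) (volume.restrict (Set.Ioi 0)) := by
    apply Measurable.aestronglyMeasurable
    exact (hmeas.mul (measurable_neg.mul
      (Real.measurable_exp.comp (measurable_id.const_mul (-(0:ℝ)))))).mul
      (Real.measurable_exp.comp measurable_neg)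
  have hFint : Integrable (F 0) (volume.restrict (Set.Ioi 0)) := by
    refine (integrable_term hmeas hpos hint 0).congr ?_
    filter_upwards with s
    simp [hFdef]
  have h_bound : ∀ᵐ s ∂(volume.restrict (Set.Ioi (0:ℝ))),
      ∀ x ∈ Metric.ball (0:ℝ) (1/2), ‖F' x s‖ ≤ 2 * p s := by
    filter_upwards [ae_restrict_mem measurableSet_Ioi] with s hs x hx
    have hs0 : (0:ℝ) < s := hs
    have hx2 : |x| < 1/2 := by simpa [Real.dist_eq] using hx
    have hps : 0 ≤ p s := hpos s hs0.le
    rw [hF'def]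
    simp only []
    rw [Real.norm_eq_abs, abs_mul, abs_mul, abs_of_nonneg hps,
      abs_of_nonneg (Real.exp_pos (-s)).le, abs_mul, abs_neg,
      abs_of_nonneg hs0.le, abs_of_nonneg (Real.exp_pos _).le]
    have h1 : Real.exp (-x * s) * Real.exp (-s) ≤ Real.exp (-s/2) := by
      rw [← Real.exp_add]
      apply Real.exp_le_exp.mpr
      have := abs_lt.mp hx2
      nlinarith
    have h2 : s * Real.exp (-s/2) ≤ 2 := by
      have hA : s ≤ 2 * Real.exp (s/2) := by nlinarith [Real.add_one_le_exp (s/2)]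
      calc s * Real.exp (-s/2) ≤ (2 * Real.exp (s/2)) * Real.exp (-s/2) :=
            mul_le_mul_of_nonneg_right hA (Real.exp_pos _).le
        _ = 2 := by
            have hss : s/2 + -s/2 = 0 := by ring
            rw [mul_assoc, ← Real.exp_add, hss, Real.exp_zero, mul_one]
    calc p s * (s * Real.exp (-x * s)) * Real.exp (-s)
        = p s * (s * (Real.exp (-x * s) * Real.exp (-s))) := by ring
      _ ≤ p s * (s * Real.exp (-s/2)) := by
          apply mul_le_mul_of_nonneg_left _ hps
          exact mul_le_mul_of_nonneg_left h1 hs0.le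
      _ ≤ p s * 2 := mul_le_mul_of_nonneg_left h2 hps
      _ = 2 * p s := by ring
  have h_diff : ∀ᵐ s ∂(volume.restrict (Set.Ioi (0:ℝ))),
      ∀ x ∈ Metric.ball (0:ℝ) (1/2), HasDerivAt (fun x => F x s) (F' x s) x := by
    filter_upwards with s x _
    have hx : HasDerivAt (fun x : ℝ => -x * s) (-s) x := by
      simpa using ((hasDerivAt_id x).neg.mul_const s)
    have hexp := hx.exp
    have := (hexp.const_mul (p s)).mul_const (Real.exp (-s))
    have e : F' x s = p s * (Real.exp (-x * s) * -s) * Real.exp (-s) := by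
      rw [hF'def]
      ring
    rw [e]
    exact this
  have hres := hasDerivAt_integral_of_dominated_loc_of_deriv_le (F := F) (F' := F')
    (x₀ := (0:ℝ)) (bound := fun s => 2 * p s) (Metric.ball_mem_nhds (0:ℝ) (by norm_num : (0:ℝ) < 1/2))
    (Filter.Eventually.of_forall hFmeas) hFint hF'meas h_bound (hint.const_mul 2) h_diff
  have hintF' : ∫ s in Set.Ioi (0:ℝ), F' 0 s = -(moment p 1) := by
    rw [moment, ← MeasureTheory.integral_neg]
    apply setIntegral_congr_fun measurableSet_Ioi
    intro s _
    rw [hF'def]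
    simp only [Real.exp_zero, pow_one, neg_zero, zero_mul, mul_one]
    ring
  have hder : HasDerivAt (fun ε => ∫ s in Set.Ioi (0:ℝ), F ε s) (-(moment p 1)) 0 := by
    rw [← hintF']
    exact hres.2
  have hgd : HasDerivWithinAt (fun ε => 1 - ∫ s in Set.Ioi (0:ℝ), F ε s)
      (moment p 1) (Set.Ici 0) 0 := by
    have h : HasDerivAt (fun ε => 1 - ∫ s in Set.Ioi (0:ℝ), F ε s) (0 - -(moment p 1)) 0 :=
      (hasDerivAt_const (0:ℝ) (1:ℝ)).sub hder
    simpa using h.hasDerivWithinAt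
  refine hgd.congr ?_ ?_
  · intro ε hε
    rw [key ε hε, hmom ε]
  · rw [key 0 le_rfl, hmom 0]

end Final

theorem stmt3 (p : ℝ → ℝ) (hmeas : Measurable p) (hpos : ∀ s, 0 ≤ s → 0 ≤ p s)
    (hint : IntegrableOn p (Set.Ioi 0)) :
    -- `v` extends real-analytically at `0`, with the stated derivatives at `0`
    (∃ vext : ℝ → ℝ, AnalyticAt ℝ vext 0 ∧
      (∀ᶠ t in nhdsWithin (0 : ℝ) (Set.Ici 0), vext t = vFun p t) ∧
      vext 0 = 0 ∧ deriv vext 0 = moment p 0 ∧ iteratedDeriv 2 vext 0 = moment p 1 ∧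
      (∀ k : ℕ, 1 ≤ k →
        iteratedDeriv k vext 0 = moment p (k - 1) / (Nat.factorial (k - 1) : ℝ))) ∧
    -- `V` extends real-analytically at `0`, with the stated derivatives at `0`
    (∃ Vext : ℝ → ℝ, AnalyticAt ℝ Vext 0 ∧
      (∀ᶠ t in nhdsWithin (0 : ℝ) (Set.Ici 0), Vext t = VFun p t) ∧
      Vext 0 = 0 ∧ deriv Vext 0 = 1 - moment p 0 ∧
      iteratedDeriv 2 Vext 0 = (moment p 0) ^ 2 - moment p 1 ∧
      iteratedDeriv 3 Vext 0 =
        -(1 / 2) * moment p 2 + 3 * moment p 1 * moment p 0 - 2 * (moment p 0) ^ 3) ∧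
    -- the derivative at `ε = 0` of `ε ↦ V_ε'(0)` equals `M₁`
    HasDerivWithinAt
      (fun ε : ℝ =>
        derivWithin (VFun (fun s => p s * Real.exp (-ε * s))) (Set.Ici 0) 0)
      (moment p 1) (Set.Ici 0) 0 := by
  refine ⟨⟨vExt p, vExt_analyticAt hmeas hpos hint, ?_, vExt_zero hmeas hpos hint,
      vExt_deriv_zero hmeas hpos hint, ?_, vExt_iteratedDeriv' hmeas hpos hint⟩,
    ⟨VExt p, VExt_analyticAt hmeas hpos hint, ?_, VExt_zero hmeas hpos hint,
      (VExt_derivs hmeas hpos hint).1, (VExt_derivs hmeas hpos hint).2.1,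
      (VExt_derivs hmeas hpos hint).2.2⟩,
    part3 hmeas hpos hint⟩
  · filter_upwards [self_mem_nhdsWithin] with t ht
    exact vExt_eq_vFun hmeas hpos hint t ht
  · have h := vExt_iteratedDeriv' hmeas hpos hint 2 (by norm_num)
    simpa using h
  · filter_upwards [self_mem_nhdsWithin] with t ht
    exact VExt_eq_VFun hmeas hpos hint t ht
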